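/- arXiv:2601.19572 — 2 statements merged into one kernel-verified Lean document; each statement's English description precedes it below -/
import Mathlib

section
/- Fix an integer d ≥ 2, a real number t > 0 and a > 0. Then for every λ ∈ ℂ with |Im λ| ≤ a and λ ≠ ia, λ ≠ −ia, one has |φ_λ(t e₁)| < φ_{ia}(t e₁). (Note that φ_{ia}(t e₁) = ∫_{S^{d-1}} e^{−a t ω·e₁} dσ(ω) is a positive real number.) -/
open MeasureTheory Complex Metric
open scoped ENNReal Pointwise

/-- The normalized surface measure (total mass 1) on the unit sphere `S^{d-1} ⊆ ℝ^d`. -/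
noncomputable def sphereσ (d : ℕ) : Measure (Metric.sphere (0 : EuclideanSpace ℝ (Fin d)) 1) :=
  (((volume : Measure (EuclideanSpace ℝ (Fin d))).toSphere) Set.univ)⁻¹ •
    ((volume : Measure (EuclideanSpace ℝ (Fin d))).toSphere)

variable {d : ℕ}

private lemma aux_nontrivial (hd : 1 ≤ d) : Nontrivial (EuclideanSpace ℝ (Fin d)) :=
  ⟨⟨EuclideanSpace.single ⟨0, by omega⟩ 1, 0, by
    intro h; have := congrArg (fun v : EuclideanSpace ℝ (Fin d) => v ⟨0, by omega⟩) h; simp at this⟩⟩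

private lemma toSphere_univ_pos (hd : 1 ≤ d) :
    0 < (volume : Measure (EuclideanSpace ℝ (Fin d))).toSphere Set.univ := by
  haveI := aux_nontrivial hd
  rw [Measure.toSphere_apply_univ]
  have h3 : (0:ℝ≥0∞) < volume (ball (0: EuclideanSpace ℝ (Fin d)) 1) :=
    measure_ball_pos _ _ one_pos
  have hd' : (0:ℝ≥0∞) < (Module.finrank ℝ (EuclideanSpace ℝ (Fin d)) : ℝ≥0∞) := by
    simp; omega
  exact ENNReal.mul_pos hd'.ne' h3.ne'

private lemma toSphere_univ_lt_top :
    (volume : Measure (EuclideanSpace ℝ (Fin d))).toSphere Set.univ < ⊤ :=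
  measure_lt_top _ _

lemma sphereσ_prob (hd : 1 ≤ d) : IsProbabilityMeasure (sphereσ d) := by
  constructor
  rw [sphereσ, Measure.smul_apply, smul_eq_mul]
  exact ENNReal.inv_mul_cancel (toSphere_univ_pos hd).ne' toSphere_univ_lt_top.ne

lemma sphereσ_open_pos (hd : 1 ≤ d) {U : Set (sphere (0 : EuclideanSpace ℝ (Fin d)) 1)}
    (hU : IsOpen U) (hne : U.Nonempty) : 0 < sphereσ d U := by
  have hcinv : 0 < ((volume : Measure (EuclideanSpace ℝ (Fin d))).toSphere Set.univ)⁻¹ :=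
    ENNReal.inv_pos.mpr toSphere_univ_lt_top.ne
  rw [sphereσ, Measure.smul_apply, smul_eq_mul]
  refine ENNReal.mul_pos hcinv.ne' ?_
  rw [Measure.toSphere_apply' _ hU.measurableSet]
  have hdim : (0:ℝ≥0∞) < (Module.finrank ℝ (EuclideanSpace ℝ (Fin d)) : ℝ≥0∞) := by
    simp; omega
  refine (ENNReal.mul_pos hdim.ne' ?_).ne'
  -- positivity of the volume of the open cone
  obtain ⟨V, hV, hUV⟩ := isOpen_induced_iff.mp hU
  set T : Set (EuclideanSpace ℝ (Fin d)) :=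
    {x | x ≠ 0 ∧ ‖x‖ < 1 ∧ ‖x‖⁻¹ • x ∈ V} with hT
  have hTopen : IsOpen T := by
    have h1 : IsOpen {x : EuclideanSpace ℝ (Fin d) | x ≠ 0 ∧ ‖x‖ < 1} := by
      have : {x : EuclideanSpace ℝ (Fin d) | x ≠ 0 ∧ ‖x‖ < 1}
          = {(0: EuclideanSpace ℝ (Fin d))}ᶜ ∩ Metric.ball 0 1 := by
        ext x; simp [mem_ball_zero_iff]
      rw [this]
      exact (isOpen_compl_singleton).inter isOpen_ball
    have hcont : ContinuousOn (fun x : EuclideanSpace ℝ (Fin d) => ‖x‖⁻¹ • x)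
        {x : EuclideanSpace ℝ (Fin d) | x ≠ 0 ∧ ‖x‖ < 1} := by
      apply ContinuousOn.smul (f := fun x : EuclideanSpace ℝ (Fin d) => ‖x‖⁻¹) (g := fun x => x)
      · exact ((continuous_norm.continuousOn).inv₀ (fun x hx => norm_ne_zero_iff.mpr hx.1))
      · exact continuous_id.continuousOn
    have := hcont.isOpen_inter_preimage h1 hV
    convert this using 1
    ext x; constructor
    · rintro ⟨h1, h2, h3⟩; exact ⟨⟨h1, h2⟩, h3⟩
    · rintro ⟨⟨h1, h2⟩, h3⟩; exact ⟨h1, h2, h3⟩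
  have hTeq : Set.Ioo (0:ℝ) 1 • (Subtype.val '' U) = T := by
    ext x; constructor
    · rintro ⟨r, hr, y, ⟨ω, hωU, rfl⟩, rfl⟩
      have hω1 : ‖(ω : EuclideanSpace ℝ (Fin d))‖ = 1 := by
        have := ω.2; rwa [mem_sphere_zero_iff_norm] at this
      have hnorm : ‖r • (ω : EuclideanSpace ℝ (Fin d))‖ = r := by
        rw [norm_smul, hω1, mul_one, Real.norm_eq_abs, abs_of_pos hr.1]
      refine ⟨?_, ?_, ?_⟩
      · intro h; beta_reduce at h; rw [h, norm_zero] at hnorm; exact hr.1.ne hnorm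
      · rw [hnorm]; exact hr.2
      · rw [hnorm, smul_smul, inv_mul_cancel₀ hr.1.ne', one_smul]
        rw [← hUV] at hωU; exact hωU
    · rintro ⟨h0, hlt, hV'⟩
      have hn0 : ‖x‖ ≠ 0 := norm_ne_zero_iff.mpr h0
      have hpos : 0 < ‖x‖ := lt_of_le_of_ne (norm_nonneg _) (Ne.symm hn0)
      have hmem : ‖x‖⁻¹ • x ∈ Metric.sphere (0 : EuclideanSpace ℝ (Fin d)) 1 := by
        rw [mem_sphere_zero_iff_norm, norm_smul, norm_inv, norm_norm,
          inv_mul_cancel₀ hn0]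
      refine ⟨‖x‖, ⟨hpos, hlt⟩, ‖x‖⁻¹ • x, ⟨⟨_, hmem⟩, ?_, rfl⟩, ?_⟩
      · show (⟨‖x‖⁻¹ • x, hmem⟩ : Metric.sphere (0 : EuclideanSpace ℝ (Fin d)) 1) ∈ U
        rw [← hUV]; exact hV'
      · beta_reduce; rw [smul_smul, mul_inv_cancel₀ hn0, one_smul]
  rw [hTeq]
  have hTne : T.Nonempty := by
    obtain ⟨ω, hω⟩ := hne
    have hω1 : ‖(ω : EuclideanSpace ℝ (Fin d))‖ = 1 := by
      have := ω.2; rwa [mem_sphere_zero_iff_norm] at this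
    refine ⟨(2:ℝ)⁻¹ • (ω : EuclideanSpace ℝ (Fin d)), ?_, ?_, ?_⟩
    · intro h
      have : ((2:ℝ)⁻¹)⁻¹ • ((2:ℝ)⁻¹ • (ω : EuclideanSpace ℝ (Fin d))) = 0 := by rw [h, smul_zero]
      rw [smul_smul, inv_mul_cancel₀ (by norm_num), one_smul] at this
      rw [this, norm_zero] at hω1; norm_num at hω1
    · rw [norm_smul, hω1, mul_one]; norm_num
    · have : ‖(2:ℝ)⁻¹ • (ω : EuclideanSpace ℝ (Fin d))‖ = 2⁻¹ := by
        rw [norm_smul, hω1, mul_one]; norm_num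
      rw [this, smul_smul]
      norm_num
      rw [← hUV] at hω; exact hω
  exact (hTopen.measure_pos volume hTne).ne'

/-- The antipodal homeomorphism of the sphere. -/
noncomputable def negSphere (d : ℕ) : Metric.sphere (0 : EuclideanSpace ℝ (Fin d)) 1 ≃ₜ
    Metric.sphere (0 : EuclideanSpace ℝ (Fin d)) 1 where
  toFun ω := ⟨-ω.1, by
    have h := ω.2
    simp only [mem_sphere_zero_iff_norm, norm_neg] at h ⊢
    exact h⟩
  invFun ω := ⟨-ω.1, by
    have h := ω.2
    simp only [mem_sphere_zero_iff_norm, norm_neg] at h ⊢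
    exact h⟩
  left_inv ω := by ext; simp
  right_inv ω := by ext; simp
  continuous_toFun := by apply Continuous.subtype_mk; exact continuous_subtype_val.neg
  continuous_invFun := by apply Continuous.subtype_mk; exact continuous_subtype_val.neg

@[simp] lemma negSphere_coe (ω : Metric.sphere (0 : EuclideanSpace ℝ (Fin d)) 1) :
    ((negSphere d ω : Metric.sphere (0 : EuclideanSpace ℝ (Fin d)) 1) :
      EuclideanSpace ℝ (Fin d)) = -(ω : EuclideanSpace ℝ (Fin d)) := rfl

lemma negSphere_involutive (ω : Metric.sphere (0 : EuclideanSpace ℝ (Fin d)) 1) :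
    negSphere d (negSphere d ω) = ω := Subtype.ext (by simp)

lemma negSphere_measurePreserving :
    MeasurePreserving (negSphere d) (sphereσ d) (sphereσ d) := by
  have hmeas : Measurable (negSphere d) := (negSphere d).continuous.measurable
  have key : Measure.map (negSphere d)
      ((volume : Measure (EuclideanSpace ℝ (Fin d))).toSphere)
      = (volume : Measure (EuclideanSpace ℝ (Fin d))).toSphere := by
    ext s hs
    rw [Measure.map_apply hmeas hs, Measure.toSphere_apply' _ (hs.preimage hmeas),
      Measure.toSphere_apply' _ hs]
    congr 1
    have himg : Subtype.val '' ((negSphere d) ⁻¹' s)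
        = -(Subtype.val '' s) := by
      ext x
      rw [Set.mem_neg]
      constructor
      · rintro ⟨ω, hω, rfl⟩
        exact ⟨negSphere d ω, hω, by simp⟩
      · rintro ⟨ω, hω, hωx⟩
        refine ⟨negSphere d ω, ?_, ?_⟩
        · show negSphere d (negSphere d ω) ∈ s
          rw [negSphere_involutive]; exact hω
        · show -(ω : EuclideanSpace ℝ (Fin d)) = x
          rw [hωx, neg_neg]
    rw [himg]
    have hsmulneg : Set.Ioo (0:ℝ) 1 • (-(Subtype.val '' s))
        = -(Set.Ioo (0:ℝ) 1 • (Subtype.val '' s)) := by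
      ext x
      simp only [Set.mem_smul, Set.mem_neg]
      constructor
      · rintro ⟨r, hr, y, hy, rfl⟩
        exact ⟨r, hr, -y, hy, by simp⟩
      · rintro ⟨r, hr, y, hy, hxy⟩
        exact ⟨r, hr, -y, by simpa using hy, by rw [smul_neg, hxy, neg_neg]⟩
    rw [hsmulneg, Measure.measure_neg]
  constructor
  · exact hmeas
  · rw [sphereσ, Measure.map_smul, key]

lemma integral_negSphere (f : Metric.sphere (0 : EuclideanSpace ℝ (Fin d)) 1 → ℝ) :
    ∫ ω, f ((negSphere d) ω) ∂(sphereσ d) = ∫ ω, f ω ∂(sphereσ d) :=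
  negSphere_measurePreserving.integral_comp (negSphere d).measurableEmbedding f

lemma continuous_integrable_sphere {F : Type*} [NormedAddCommGroup F] [NormedSpace ℝ F]
    (hd : 1 ≤ d) {f : Metric.sphere (0 : EuclideanSpace ℝ (Fin d)) 1 → F}
    (hf : Continuous f) : Integrable f (sphereσ d) := by
  haveI := sphereσ_prob (d := d) hd
  have hcs : HasCompactSupport f := by
    apply HasCompactSupport.of_compactSpace  -- guess name
  exact hf.integrable_of_hasCompactSupport hcs

/-- continuity of the first coordinate on the sphere -/
lemma continuous_coord (i : Fin d) :
    Continuous (fun ω : Metric.sphere (0 : EuclideanSpace ℝ (Fin d)) 1 =>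
      (ω : EuclideanSpace ℝ (Fin d)) i) := by
  exact ((continuous_apply i).comp (PiLp.continuous_ofLp (p := 2) (β := fun _ : Fin d => ℝ))).comp continuous_subtype_val

/-- coordinates on the sphere are bounded by 1 -/
lemma abs_coord_le (i : Fin d) (ω : Metric.sphere (0 : EuclideanSpace ℝ (Fin d)) 1) :
    |(ω : EuclideanSpace ℝ (Fin d)) i| ≤ 1 := by
  have h1 : ‖(ω : EuclideanSpace ℝ (Fin d))‖ = 1 := by
    have := ω.2; rwa [mem_sphere_zero_iff_norm] at this
  have h2 : (ω : EuclideanSpace ℝ (Fin d)) i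
      = inner ℝ (EuclideanSpace.single i (1:ℝ)) (ω : EuclideanSpace ℝ (Fin d)) := by
    rw [EuclideanSpace.inner_single_left]; simp
  rw [h2]
  calc |inner ℝ (EuclideanSpace.single i (1:ℝ)) (ω : EuclideanSpace ℝ (Fin d))|
      ≤ ‖EuclideanSpace.single i (1:ℝ)‖ * ‖(ω : EuclideanSpace ℝ (Fin d))‖ :=
        abs_real_inner_le_norm _ _
    _ = 1 := by rw [h1, EuclideanSpace.norm_single]; simp

/-- existence of a sphere point with prescribed first coordinate -/
lemma exists_coord (hd : 2 ≤ d) (c : ℝ) (hc : |c| ≤ 1) :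
    ∃ ω : Metric.sphere (0 : EuclideanSpace ℝ (Fin d)) 1,
      (ω : EuclideanSpace ℝ (Fin d)) ⟨0, lt_of_lt_of_le two_pos hd⟩ = c := by
  set i1 : Fin d := ⟨0, by omega⟩
  set i2 : Fin d := ⟨1, by omega⟩
  have hne : i1 ≠ i2 := by simp [i1, i2, Fin.ext_iff]
  set b : ℝ := Real.sqrt (1 - c^2)
  set v : EuclideanSpace ℝ (Fin d) :=
    EuclideanSpace.single i1 c + EuclideanSpace.single i2 b with hv
  have hc2 : c^2 ≤ 1 := by nlinarith [abs_nonneg c, _root_.sq_abs c]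
  have hb2 : b^2 = 1 - c^2 := Real.sq_sqrt (by linarith)
  have hnorm : ‖v‖ = 1 := by
    have horth : inner ℝ (EuclideanSpace.single i1 c) (EuclideanSpace.single i2 b) = (0:ℝ) := by
      rw [EuclideanSpace.inner_single_left]
      simp [hne]
    have := norm_add_sq_real (EuclideanSpace.single i1 c) (EuclideanSpace.single i2 b)
    rw [horth] at this
    have h1 : ‖EuclideanSpace.single i1 c‖ = |c| := by
      simpa using EuclideanSpace.norm_single i1 c  -- guess
    have h2 : ‖EuclideanSpace.single i2 b‖ = |b| := by
      simpa using EuclideanSpace.norm_single i2 b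
    have hv2 : ‖v‖^2 = 1 := by
      rw [hv, this, h1, h2]
      rw [_root_.sq_abs, _root_.sq_abs, hb2]; ring
    nlinarith [norm_nonneg v]
  refine ⟨⟨v, by rwa [mem_sphere_zero_iff_norm]⟩, ?_⟩
  show v i1 = c
  simp [hv, EuclideanSpace.single_apply, hne]

lemma sphere_integral_pos (hd : 2 ≤ d) {u : Metric.sphere (0 : EuclideanSpace ℝ (Fin d)) 1 → ℝ}
    (hu : Continuous u) (h0 : ∀ ω, 0 ≤ u ω)
    (ω₀ : Metric.sphere (0 : EuclideanSpace ℝ (Fin d)) 1) (hpos : 0 < u ω₀) :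
    0 < ∫ ω, u ω ∂(sphereσ d) := by
  rw [integral_pos_iff_support_of_nonneg h0 (continuous_integrable_sphere (by omega) hu)]
  apply sphereσ_open_pos (by omega)
  · exact hu.isOpen_support
  · exact ⟨ω₀, hpos.ne'⟩

section G
variable (hd : 2 ≤ d) (t : ℝ)

/-- abbreviation for the first coordinate -/
noncomputable def sc (d : ℕ) [NeZero d] : Metric.sphere (0 : EuclideanSpace ℝ (Fin d)) 1 → ℝ :=
  fun ω => (ω : EuclideanSpace ℝ (Fin d)) ⟨0, Nat.pos_of_ne_zero (NeZero.ne d)⟩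

/-- the comparison integral -/
noncomputable def Gfun (d : ℕ) [NeZero d] (t b : ℝ) : ℝ :=
  ∫ ω, Real.exp (-(b * (t * sc d ω))) ∂(sphereσ d)

variable [NeZero d]

@[continuity, fun_prop]
lemma sc_continuous : Continuous (sc d) := continuous_coord _

lemma sc_neg (ω : Metric.sphere (0 : EuclideanSpace ℝ (Fin d)) 1) :
    sc d (negSphere d ω) = -(sc d ω) := by
  simp [sc]

lemma Gfun_neg (b : ℝ) : Gfun d t (-b) = Gfun d t b := by
  have h := integral_negSphere (d := d) (fun ω => Real.exp (-(b * (t * sc d ω))))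
  calc Gfun d t (-b) = ∫ ω, Real.exp (-(b * (t * sc d (negSphere d ω)))) ∂(sphereσ d) := by
        unfold Gfun
        congr 1; funext ω; rw [sc_neg]; ring_nf
    _ = Gfun d t b := h

lemma Gfun_eq_cosh (hd : 1 ≤ d) (b : ℝ) :
    Gfun d t b = ∫ ω, Real.cosh (b * (t * sc d ω)) ∂(sphereσ d) := by
  have hint : ∀ c : ℝ, Integrable (fun ω => Real.exp (-(c * (t * sc d ω)))) (sphereσ d) := by
    intro c
    exact continuous_integrable_sphere hd (by fun_prop)
  have h2 : Gfun d t b = (Gfun d t b + Gfun d t (-b)) / 2 := by rw [Gfun_neg]; ring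
  rw [h2]
  unfold Gfun
  rw [← integral_add (hint b) (hint (-b)), ← integral_div]
  congr 1; funext ω
  rw [Real.cosh_eq]
  ring_nf

lemma Gfun_le (hd : 2 ≤ d) {b a : ℝ} (hb : |b| ≤ a) : Gfun d t b ≤ Gfun d t a := by
  rw [Gfun_eq_cosh t (by omega), Gfun_eq_cosh t (by omega)]
  apply integral_mono
  · exact continuous_integrable_sphere (by omega) (by fun_prop)
  · exact continuous_integrable_sphere (by omega) (by fun_prop)
  intro ω
  apply Real.cosh_le_cosh.mpr
  rw [abs_mul, abs_mul, abs_mul, abs_mul]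
  have : |b| * (|t| * |sc d ω|) ≤ a * (|t| * |sc d ω|) := by
    apply mul_le_mul_of_nonneg_right hb (by positivity)
  calc |b| * (|t| * |sc d ω|) ≤ a * (|t| * |sc d ω|) := this
    _ ≤ |a| * (|t| * |sc d ω|) := by
        apply mul_le_mul_of_nonneg_right (le_abs_self a) (by positivity)

set_option maxHeartbeats 1000000 in
lemma Gfun_lt (hd : 2 ≤ d) (ht : 0 < t) {b a : ℝ} (ha : 0 < a) (hb : |b| < a) :
    Gfun d t b < Gfun d t a := by
  rw [Gfun_eq_cosh t (by omega), Gfun_eq_cosh t (by omega)]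
  have hint1 : Integrable (fun ω => Real.cosh (b * (t * sc d ω))) (sphereσ d) :=
    continuous_integrable_sphere (by omega) (by fun_prop)
  have hint2 : Integrable (fun ω => Real.cosh (a * (t * sc d ω))) (sphereσ d) :=
    continuous_integrable_sphere (by omega) (by fun_prop)
  have key : 0 < ∫ ω, (Real.cosh (a * (t * sc d ω)) - Real.cosh (b * (t * sc d ω))) ∂(sphereσ d) := by
    obtain ⟨ω₀, hω₀⟩ := exists_coord hd (1/2) (by rw [abs_of_pos]; norm_num; norm_num)
    have hsc0 : sc d ω₀ = 1/2 := by
      exact hω₀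
    apply sphere_integral_pos hd (by fun_prop) ?_ ω₀
    · rw [sub_pos]
      apply Real.cosh_lt_cosh.mpr
      rw [hsc0, abs_mul, abs_mul, abs_mul, abs_mul]
      have h12 : |(1:ℝ)/2| = 1/2 := by norm_num
      rw [h12, abs_of_pos ht, abs_of_pos ha]
      have : 0 < t * (1/2) := by positivity
      exact mul_lt_mul_of_pos_right hb this
    · intro ω
      rw [sub_nonneg]
      apply Real.cosh_le_cosh.mpr
      rw [abs_mul, abs_mul, abs_mul, abs_mul]
      apply mul_le_mul_of_nonneg_right _ (by positivity)
      calc |b| ≤ a := hb.le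
        _ = |a| := (abs_of_pos ha).symm
  have := integral_sub hint2 hint1
  rw [this] at key
  linarith

end G

/-- The Euclidean spherical function `φ_λ(x) = ∫_{S^{d-1}} e^{iλ x·ω} dσ(ω)`. -/
noncomputable def phiFn (d : ℕ) (lam : ℂ) (x : EuclideanSpace ℝ (Fin d)) : ℂ :=
  ∫ ω : Metric.sphere (0 : EuclideanSpace ℝ (Fin d)) 1,
    Complex.exp (Complex.I * lam * ((inner ℝ x (ω : EuclideanSpace ℝ (Fin d)) : ℝ) : ℂ)) ∂(sphereσ d)

/-- For `λ` in the strip `|Im λ| ≤ a` with `λ ≠ ± i a`, one has `|φ_λ(t e₁)| < φ_{ia}(t e₁)`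
(the latter being a positive real number, expressed here via its real part). -/
theorem statement0 (d : ℕ) (hd : 2 ≤ d) (t a : ℝ) (ht : 0 < t) (ha : 0 < a)
    (lam : ℂ) (hstrip : |lam.im| ≤ a)
    (h1 : lam ≠ Complex.I * (a : ℂ)) (h2 : lam ≠ -(Complex.I * (a : ℂ))) :
    ‖phiFn d lam (t • EuclideanSpace.single (⟨0, by omega⟩ : Fin d) 1)‖
      < (phiFn d (Complex.I * (a : ℂ)) (t • EuclideanSpace.single (⟨0, by omega⟩ : Fin d) 1)).re := by
  haveI : NeZero d := ⟨by omega⟩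
  set x : EuclideanSpace ℝ (Fin d) := t • EuclideanSpace.single (⟨0, by omega⟩ : Fin d) 1 with hx
  have hinner : ∀ ω : Metric.sphere (0 : EuclideanSpace ℝ (Fin d)) 1,
      (inner ℝ x (ω : EuclideanSpace ℝ (Fin d)) : ℝ) = t * sc d ω := by
    intro ω
    rw [hx, real_inner_smul_left, EuclideanSpace.inner_single_left]
    simp [sc]
  have hphi : ∀ mu : ℂ, phiFn d mu x
      = ∫ ω, Complex.exp (I * mu * ((t * sc d ω : ℝ) : ℂ)) ∂(sphereσ d) := by
    intro mu
    unfold phiFn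
    congr 1; funext ω; rw [hinner ω]
  -- the right-hand side equals `Gfun d t a`
  have hRHS : (phiFn d (Complex.I * (a:ℂ)) x).re = Gfun d t a := by
    rw [hphi]
    have heq : (fun ω : Metric.sphere (0 : EuclideanSpace ℝ (Fin d)) 1 =>
        Complex.exp (I * (I * (a:ℂ)) * ((t * sc d ω : ℝ) : ℂ)))
        = fun ω => ((Real.exp (-(a * (t * sc d ω))) : ℝ) : ℂ) := by
      funext ω
      rw [Complex.ofReal_exp]
      congr 1
      have hI : I * (I * (a:ℂ)) = -(a:ℂ) := by rw [← mul_assoc, Complex.I_mul_I]; ring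
      rw [hI]
      push_cast
      ring
    rw [heq]
    have h5 : (∫ ω, ((Real.exp (-(a * (t * sc d ω))) : ℝ) : ℂ) ∂(sphereσ d))
        = ((∫ ω, Real.exp (-(a * (t * sc d ω))) ∂(sphereσ d) : ℝ) : ℂ) := integral_ofReal
    rw [h5, Complex.ofReal_re]
    rfl
  set b : ℝ := lam.im with hbdef
  set g : Metric.sphere (0 : EuclideanSpace ℝ (Fin d)) 1 → ℂ :=
    fun ω => Complex.exp (I * lam * ((t * sc d ω : ℝ) : ℂ)) with hgdef
  have hg_cont : Continuous g := by
    apply Complex.continuous_exp.comp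
    fun_prop
  have hg_int : Integrable g (sphereσ d) := continuous_integrable_sphere (by omega) hg_cont
  have habs : ∀ ω, ‖g ω‖ = Real.exp (-(b * (t * sc d ω))) := by
    intro ω
    rw [hgdef]
    show ‖_‖ = _
    rw [Complex.norm_exp]
    congr 1
    simp [Complex.mul_re, hbdef]
  have hnorm_int : ∫ ω, ‖g ω‖ ∂(sphereσ d) = Gfun d t b := by
    unfold Gfun; congr 1; funext ω; rw [habs]
  have hphilam : phiFn d lam x = ∫ ω, g ω ∂(sphereσ d) := hphi lam
  rw [hphilam, hRHS]
  rcases eq_or_ne lam.re 0 with hr | hr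
  · -- purely imaginary case : |b| < a
    have hb1 : b ≠ a := by
      intro h
      apply h1
      apply Complex.ext
      · simp [hr]
      · simpa using h
    have hb2 : b ≠ -a := by
      intro h
      apply h2
      apply Complex.ext
      · simp [hr]
      · simpa using h
    have hblt : |b| < a := by
      rcases lt_or_eq_of_le hstrip with h | h
      · exact h
      · exfalso
        rcases abs_eq ha.le |>.mp h with h' | h'
        exacts [hb1 h', hb2 h']
    calc ‖∫ ω, g ω ∂(sphereσ d)‖ ≤ ∫ ω, ‖g ω‖ ∂(sphereσ d) :=
          norm_integral_le_integral_norm g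
      _ = Gfun d t b := hnorm_int
      _ < Gfun d t a := Gfun_lt t hd ht ha hblt
  · -- case lam.re ≠ 0 : strict triangle inequality
    have hGle : Gfun d t b ≤ Gfun d t a := Gfun_le t hd hstrip
    set z : ℂ := ∫ ω, g ω ∂(sphereσ d) with hz
    rcases eq_or_ne z 0 with hz0 | hz0
    · rw [hz0]
      simp only [norm_zero]
      -- 0 < Gfun d t a
      obtain ⟨ω₀, hω₀⟩ := exists_coord hd 0 (by norm_num)
      have : 0 < Gfun d t a := by
        apply sphere_integral_pos hd (by fun_prop) (fun ω => (Real.exp_pos _).le) ω₀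
        exact Real.exp_pos _
      exact this
    · set θ : ℝ := Complex.arg z with hθ
      set c : ℂ := Complex.exp (-(θ:ℝ) * I) with hc
      have hc1 : ‖c‖ = 1 := by
        rw [hc, Complex.norm_exp]
        simp
      have hcz : c * z = (‖z‖ : ℂ) := by
        conv_lhs => rw [← Complex.norm_mul_exp_arg_mul_I z]
        rw [hc, ← hθ, mul_comm, mul_assoc, ← Complex.exp_add]
        simp
      -- the integrand u
      set u : Metric.sphere (0 : EuclideanSpace ℝ (Fin d)) 1 → ℝ :=
        fun ω => ‖g ω‖ - (c * g ω).re with hu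
      have hcg : ∀ ω, (c * g ω).re
          = Real.exp (-(b * (t * sc d ω))) * Real.cos (lam.re * (t * sc d ω) - θ) := by
        intro ω
        rw [hgdef]
        show (c * Complex.exp _).re = _
        rw [hc, ← Complex.exp_add, Complex.exp_re]
        congr 2
        · simp [Complex.mul_re, hbdef]
        · simp [Complex.mul_im]
          ring
      have hu_nonneg : ∀ ω, 0 ≤ u ω := by
        intro ω
        rw [hu]
        simp only [sub_nonneg]
        calc (c * g ω).re ≤ ‖c * g ω‖ := Complex.re_le_norm _
          _ = ‖g ω‖ := by rw [norm_mul, hc1, one_mul]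
      -- find a point where u is positive
      have hR : lam.re * t ≠ 0 := mul_ne_zero hr ht.ne'
      obtain ⟨v, hv1, hvcos⟩ : ∃ v : ℝ, |v| ≤ 1 ∧ Real.cos (lam.re * t * v - θ) < 1 := by
        by_contra hcon
        push_neg at hcon
        have hall : ∀ v : ℝ, |v| ≤ 1 → Real.cos (lam.re * t * v - θ) = 1 := by
          intro v hv
          exact le_antisymm (Real.cos_le_one _) (hcon v hv)
        set v2 : ℝ := min (1/2) |lam.re * t|⁻¹ with hv2
        have hv2pos : 0 < v2 := lt_min (by norm_num) (by positivity)
        have hv2le : |v2| ≤ 1 := by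
          rw [abs_of_pos hv2pos]
          calc v2 ≤ 1/2 := min_le_left _ _
            _ ≤ 1 := by norm_num
        have hv2small : |lam.re * t| * v2 ≤ 1 := by
          calc |lam.re * t| * v2 ≤ |lam.re * t| * |lam.re * t|⁻¹ :=
                mul_le_mul_of_nonneg_left (min_le_right _ _) (abs_nonneg _)
            _ = 1 := mul_inv_cancel₀ (by simpa using hR)
        obtain ⟨n, hn⟩ := (Real.cos_eq_one_iff _).mp (hall 0 (by norm_num))
        obtain ⟨m, hm⟩ := (Real.cos_eq_one_iff _).mp (hall v2 hv2le)
        have hdiff : ((m - n : ℤ) : ℝ) * (2 * Real.pi) = lam.re * t * v2 := by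
          push_cast
          rw [sub_mul, hn, hm]
          ring
        have hRv2 : lam.re * t * v2 ≠ 0 := mul_ne_zero hR hv2pos.ne'
        rcases eq_or_ne m n with hmn | hmn
        · apply hRv2
          rw [← hdiff, hmn]
          push_cast
          ring
        · have h1' : (1:ℝ) ≤ |((m - n : ℤ) : ℝ)| := by
            rw [← Int.cast_abs]
            exact_mod_cast Int.one_le_abs (sub_ne_zero.mpr hmn)
          have hpi : (2:ℝ) ≤ 2 * Real.pi := by
            nlinarith [Real.pi_gt_three]
          have : (2:ℝ) ≤ |((m - n : ℤ) : ℝ) * (2 * Real.pi)| := by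
            rw [abs_mul]
            calc (2:ℝ) = 1 * 2 := by norm_num
              _ ≤ |((m - n : ℤ) : ℝ)| * |2 * Real.pi| := by
                  apply mul_le_mul h1' _ (by norm_num) (abs_nonneg _)
                  rw [abs_of_pos (by positivity)]
                  exact hpi
          rw [hdiff] at this
          have : |lam.re * t * v2| ≤ 1 := by
            rw [abs_mul, abs_of_pos hv2pos]
            exact hv2small
          linarith [abs_mul (lam.re * t) v2 ▸ this]
      obtain ⟨ω₁, hω₁⟩ := exists_coord hd v hv1
      have hscω₁ : sc d ω₁ = v := hω₁
      have hu_pos : 0 < u ω₁ := by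
        rw [hu]
        simp only
        rw [habs, hcg, hscω₁]
        have hcos : Real.cos (lam.re * (t * v) - θ) < 1 := by
          rw [← mul_assoc]; exact hvcos
        nlinarith [Real.exp_pos (-(b * (t * v)))]
      have hu_cont : Continuous u := by
        rw [hu]
        exact hg_cont.norm.sub (Complex.continuous_re.comp (continuous_const.mul hg_cont))
      have hu_int_pos : 0 < ∫ ω, u ω ∂(sphereσ d) :=
        sphere_integral_pos hd hu_cont hu_nonneg ω₁ hu_pos
      -- |z| = ∫ (c*g).re
      have hcg_int : Integrable (fun ω => c * g ω) (sphereσ d) := hg_int.const_mul c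
      have hzre : (‖z‖ : ℝ) = ∫ ω, (c * g ω).re ∂(sphereσ d) := by
        have h3 : c * z = ∫ ω, c * g ω ∂(sphereσ d) := by
          rw [hz, ← integral_const_mul]
        have h4 := integral_re hcg_int (𝕜 := ℂ)
        simp only [RCLike.re_to_complex] at h4
        have : (c * z).re = ∫ ω, (c * g ω).re ∂(sphereσ d) := by
          rw [h3, ← h4]
        rw [← this, hcz, Complex.ofReal_re]
      have hint1' : Integrable (fun ω => ‖g ω‖) (sphereσ d) :=
        continuous_integrable_sphere (by omega) hg_cont.norm
      have hint2' : Integrable (fun ω => (c * g ω).re) (sphereσ d) :=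
        continuous_integrable_sphere (by omega)
          (Complex.continuous_re.comp (continuous_const.mul hg_cont))
      have hnormu : ∫ ω, u ω ∂(sphereσ d)
          = (∫ ω, ‖g ω‖ ∂(sphereσ d)) - ∫ ω, (c * g ω).re ∂(sphereσ d) := by
        rw [hu]
        exact integral_sub hint1' hint2'
      calc ‖z‖ = ∫ ω, (c * g ω).re ∂(sphereσ d) := hzre
        _ < ∫ ω, ‖g ω‖ ∂(sphereσ d) := by
            have := hnormu ▸ hu_int_pos
            linarith [hnormu ▸ hu_int_pos]
        _ = Gfun d t b := hnorm_int
        _ ≤ Gfun d t a := hGle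
end

section
/- Let d ≥ 1, let ζ^(1), …, ζ^(k) be distinct vectors in ℝ^d, let Q₁, …, Q_k be polynomials in d variables with complex coefficients, and let f : ℝ^d → ℂ be the function f(x) = Σ_{j=1}^k Q_j(x) e^{i x·ζ^(j)}. Then: (1) if f ∈ L^p(ℝ^d) for some 1 ≤ p < ∞, then all the polynomials Q_j are identically zero (hence f ≡ 0); (2) if f ∈ L^∞(ℝ^d), then all the polynomials Q_j are constant. -/
open MeasureTheory Complex MvPolynomial
open scoped ENNReal

noncomputable section
variable {d : ℕ}



def shiftP (a : Fin d → ℂ) : MvPolynomial (Fin d) ℂ →ₐ[ℂ] MvPolynomial (Fin d) ℂ :=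
  aeval (fun i => X i + C (a i))

def DegLt (p : MvPolynomial (Fin d) ℂ) (n : ℕ) : Prop := p = 0 ∨ p.totalDegree < n

lemma DegLt.mono {p : MvPolynomial (Fin d) ℂ} {n m : ℕ} (h : DegLt p n) (hnm : n ≤ m) :
    DegLt p m := h.imp id fun h' => lt_of_lt_of_le h' hnm

lemma DegLt.add {p q : MvPolynomial (Fin d) ℂ} {n : ℕ} (hp : DegLt p n) (hq : DegLt q n) :
    DegLt (p + q) n := by
  rcases hp with rfl | hp
  · simpa using hq
  rcases hq with rfl | hq
  · rw [add_zero]; exact Or.inr hp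
  exact Or.inr <| lt_of_le_of_lt (totalDegree_add p q) (max_lt hp hq)

lemma DegLt.neg {p : MvPolynomial (Fin d) ℂ} {n : ℕ} (hp : DegLt p n) : DegLt (-p) n := by
  rcases hp with rfl | hp
  · simp [DegLt]
  · exact Or.inr (by simpa [totalDegree_neg] using hp)

lemma DegLt.sub {p q : MvPolynomial (Fin d) ℂ} {n : ℕ} (hp : DegLt p n) (hq : DegLt q n) :
    DegLt (p - q) n := by rw [sub_eq_add_neg]; exact hp.add hq.neg

lemma DegLt.mul_left {p q : MvPolynomial (Fin d) ℂ} {n m : ℕ}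
    (hq : q.totalDegree ≤ n) (hp : DegLt p m) : DegLt (q * p) (n + m) := by
  rcases hp with rfl | hp
  · simp [DegLt]
  · exact Or.inr <| lt_of_le_of_lt (totalDegree_mul q p) (by omega)

lemma DegLt.mul_right {p q : MvPolynomial (Fin d) ℂ} {n m : ℕ}
    (hp : DegLt p n) (hq : q.totalDegree ≤ m) : DegLt (p * q) (n + m) := by
  rcases hp with rfl | hp
  · simp [DegLt]
  · exact Or.inr <| lt_of_le_of_lt (totalDegree_mul p q) (by omega)

lemma DegLt.C_mul {p : MvPolynomial (Fin d) ℂ} {n : ℕ} (c : ℂ) (hp : DegLt p n) :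
    DegLt (C c * p) n := by
  have := DegLt.mul_left (q := C c) (n := 0) (by simp) hp
  simpa using this

lemma pow_diff_degLt (a : Fin d → ℂ) (i : Fin d) (n : ℕ) :
    DegLt ((X i + C (a i)) ^ n - X i ^ n) n := by
  induction n with
  | zero => simp [DegLt]
  | succ n ih =>
    have key : (X i + C (a i)) ^ (n+1) - X i ^ (n+1)
        = (X i + C (a i)) * ((X i + C (a i)) ^ n - X i ^ n) + C (a i) * X i ^ n := by
      ring
    rw [key]
    have h1 : DegLt ((X i + C (a i)) * ((X i + C (a i)) ^ n - X i ^ n)) (1 + n) :=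
      DegLt.mul_left (le_trans (totalDegree_add _ _) (by simp)) ih
    have h2 : DegLt (C (a i) * X i ^ n : MvPolynomial (Fin d) ℂ) (n + 1) := by
      refine DegLt.C_mul _ (Or.inr ?_)
      simpa [totalDegree_X_pow] using Nat.lt_succ_self n
    exact (h1.mono (by omega)).add h2

lemma monomial_diff_degLt (a : Fin d → ℂ) (s : Fin d →₀ ℕ) :
    DegLt (shiftP a (monomial s 1) - monomial s 1) (s.sum fun _ e => e) := by
  induction s using Finsupp.induction with
  | zero => simp [DegLt, shiftP]
  | single_add i n s hi hn ih =>
    have hmon : (monomial (Finsupp.single i n + s) (1 : ℂ)) =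
        X i ^ n * monomial s 1 := by
      rw [X_pow_eq_monomial, monomial_mul, one_mul]
    have hτ : shiftP a (monomial (Finsupp.single i n + s) (1 : ℂ)) =
        (X i + C (a i)) ^ n * shiftP a (monomial s 1) := by
      rw [hmon, map_mul, map_pow]
      simp [shiftP]
    set A : MvPolynomial (Fin d) ℂ := X i ^ n with hA
    set B : MvPolynomial (Fin d) ℂ := monomial s 1 with hB
    set e : MvPolynomial (Fin d) ℂ := (X i + C (a i)) ^ n - X i ^ n with he
    set e' : MvPolynomial (Fin d) ℂ := shiftP a (monomial s 1) - monomial s 1 with he'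
    have hkey : shiftP a (monomial (Finsupp.single i n + s) (1:ℂ))
        - monomial (Finsupp.single i n + s) 1 = A * e' + e * B + e * e' := by
      rw [hτ, hmon]
      have : (X i + C (a i)) ^ n = A + e := by rw [he]; ring
      have h2 : shiftP a (monomial s (1:ℂ)) = B + e' := by rw [he']; ring
      rw [this, h2]; ring
    rw [hkey]
    have hsum : ((Finsupp.single i n + s).sum fun _ e => e) = n + (s.sum fun _ e => e) := by
      rw [Finsupp.sum_add_index (by simp) (by simp)]
      simp [Finsupp.sum_single_index]
    rw [hsum]
    have hAe' : DegLt (A * e') (n + s.sum fun _ e => e) :=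
      DegLt.mul_left (by simp [hA, totalDegree_X_pow]) ih
    have he_lt : DegLt e n := pow_diff_degLt a i n
    have heB : DegLt (e * B) (n + s.sum fun _ e => e) :=
      DegLt.mul_right he_lt (by simp [hB, totalDegree_monomial_le])
    have hee' : DegLt (e * e') (n + s.sum fun _ e => e) := by
      rcases ih with h0 | hlt
      · rw [h0]; simp [DegLt]
      · exact DegLt.mul_right he_lt (le_of_lt hlt)
    exact (hAe'.add heB).add hee'




/-- F1: the shift difference drops total degree. -/
lemma shift_sub_degLt (a : Fin d → ℂ) (Q : MvPolynomial (Fin d) ℂ) :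
    DegLt (shiftP a Q - Q) Q.totalDegree := by
  conv_lhs => rw [Q.as_sum]
  rw [map_sum, ← Finset.sum_sub_distrib]
  have : ∀ s ∈ Q.support, DegLt (shiftP a (monomial s (coeff s Q)) - monomial s (coeff s Q))
      Q.totalDegree := by
    intro s hs
    have h1 : monomial s (coeff s Q) = C (coeff s Q) * monomial s 1 := by
      rw [C_mul_monomial, mul_one]
    rw [h1, map_mul]
    have h2 : shiftP a (C (coeff s Q)) = C (coeff s Q) := by simp [shiftP]
    rw [h2, ← mul_sub]
    exact DegLt.C_mul _ ((monomial_diff_degLt a s).mono (le_totalDegree hs))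
  -- sum of DegLt is DegLt
  revert this
  generalize Q.support = S
  intro h
  induction S using Finset.induction with
  | empty => simp [DegLt]
  | insert _ _ hni ih =>
    rw [Finset.sum_insert hni]
    exact (h _ (Finset.mem_insert_self _ _)).add
      (ih fun s hs => h s (Finset.mem_insert_of_mem hs))

lemma totalDegree_shiftP_le (a : Fin d → ℂ) (Q : MvPolynomial (Fin d) ℂ) :
    (shiftP a Q).totalDegree ≤ Q.totalDegree := by
  have h := shift_sub_degLt a Q
  have : shiftP a Q = (shiftP a Q - Q) + Q := by ring
  rw [this]
  rcases h with h0 | hlt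
  · simp [h0]
  · exact le_trans (totalDegree_add _ _) (by simp [le_of_lt hlt])

lemma totalDegree_C_mul_eq {c : ℂ} (hc : c ≠ 0) (Q : MvPolynomial (Fin d) ℂ) :
    (C c * Q).totalDegree = Q.totalDegree := by
  apply le_antisymm
  · simpa using totalDegree_mul (C c) Q
  · have : Q = C c⁻¹ * (C c * Q) := by
      rw [← mul_assoc, ← C_mul, inv_mul_cancel₀ hc, C_1, one_mul]
    conv_lhs => rw [this]
    simpa using totalDegree_mul (C c⁻¹) (C c * Q)

/-- F2 -/
lemma eq_zero_of_shift_rel {a : Fin d → ℂ} {β γ : ℂ} (hβγ : β ≠ γ)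
    {Q : MvPolynomial (Fin d) ℂ} (h : C β * shiftP a Q - C γ * Q = 0) : Q = 0 := by
  by_contra hQ
  have key : C (γ - β) * Q = C β * (shiftP a Q - Q) := by
    rw [mul_sub]; rw [sub_eq_zero] at h
    rw [C_sub]; ring_nf; rw [h]; ring
  have h1 : DegLt (C (γ - β) * Q) Q.totalDegree := by
    rw [key]; exact (shift_sub_degLt a Q).C_mul _
  have hne : C (γ - β) * Q ≠ 0 := by
    apply mul_ne_zero _ hQ
    simpa [sub_eq_zero] using fun h' => hβγ h'.symm
  rcases h1 with h0 | hlt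
  · exact hne h0
  · rw [totalDegree_C_mul_eq (by simpa [sub_eq_zero] using fun h' => hβγ h'.symm) Q] at hlt
    exact lt_irrefl _ hlt

lemma eq_C_of_totalDegree_eq_zero {Q : MvPolynomial (Fin d) ℂ} (h : Q.totalDegree = 0) :
    Q = C (coeff 0 Q) := by
  ext m
  rcases eq_or_ne m 0 with rfl | hm
  · simp
  · rw [coeff_C, if_neg (Ne.symm hm)]
    by_contra hc
    have hmem : m ∈ Q.support := by simpa [mem_support_iff] using hc
    have := (totalDegree_eq_zero_iff (Fin d) Q).mp h m hmem
    exact hm (Finsupp.ext this)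

/-- F2' -/
lemma eq_C_of_shift_rel {a : Fin d → ℂ} {β γ c : ℂ} (hβγ : β ≠ γ)
    {Q : MvPolynomial (Fin d) ℂ} (h : C β * shiftP a Q - C γ * Q = C c) :
    ∃ c', Q = C c' := by
  rcases Nat.eq_zero_or_pos Q.totalDegree with h0 | hpos
  · exact ⟨_, eq_C_of_totalDegree_eq_zero h0⟩
  exfalso
  have key : C (γ - β) * Q = C β * (shiftP a Q - Q) - C c := by
    rw [mul_sub, C_sub, ← h]; ring
  have hCc : DegLt (C c : MvPolynomial (Fin d) ℂ) Q.totalDegree := by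
    rcases eq_or_ne c 0 with rfl | hc
    · left; simp
    · right; simpa [totalDegree_C] using hpos
  have h1 : DegLt (C (γ - β) * Q) Q.totalDegree := by
    rw [key, sub_eq_add_neg]
    refine DegLt.add (((shift_sub_degLt a Q)).C_mul _) ?_
    rcases hCc with h0 | hlt
    · left; simp [h0]
    · right; simpa [totalDegree_neg] using hlt
  have hγβ : γ - β ≠ 0 := by simpa [sub_eq_zero] using fun h' => hβγ h'.symm
  rcases h1 with h0 | hlt
  · rcases mul_eq_zero.mp h0 with hC | hQ0
    · exact hγβ (by
        have := (MvPolynomial.C_injective (Fin d) ℂ) (by simpa using hC : C (γ-β) = C 0)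
        simpa using this)
    · rw [hQ0] at hpos; simp at hpos
  · rw [totalDegree_C_mul_eq hγβ Q] at hlt
    exact lt_irrefl _ hlt



def wdeg (p : MvPolynomial (Fin d) ℂ) : ℕ := if p = 0 then 0 else p.totalDegree + 1

lemma wdeg_zero : wdeg (0 : MvPolynomial (Fin d) ℂ) = 0 := by simp [wdeg]

lemma wdeg_eq_zero_iff {p : MvPolynomial (Fin d) ℂ} : wdeg p = 0 ↔ p = 0 := by
  unfold wdeg; split <;> simp_all

lemma wdeg_le_of_degLt {p : MvPolynomial (Fin d) ℂ} {n : ℕ} (h : DegLt p n) : wdeg p ≤ n := by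
  rcases h with rfl | h
  · simp [wdeg]
  · unfold wdeg; split
    · omega
    · omega

lemma wdeg_R_le (a : Fin d → ℂ) (β γ : ℂ) (Q : MvPolynomial (Fin d) ℂ) :
    wdeg (C β * shiftP a Q - C γ * Q) ≤ wdeg Q := by
  rcases eq_or_ne Q 0 with rfl | hQ
  · simp [wdeg]
  · have h1 : (C β * shiftP a Q - C γ * Q).totalDegree ≤ Q.totalDegree := by
      rw [sub_eq_add_neg]
      refine le_trans (totalDegree_add _ _) (max_le ?_ ?_)
      · exact le_trans (totalDegree_mul _ _) (by simpa using totalDegree_shiftP_le a Q)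
      · rw [totalDegree_neg]
        exact le_trans (totalDegree_mul _ _) (by simp)
    unfold wdeg
    rw [if_neg hQ]
    split
    · omega
    · omega

lemma wdeg_R_lt (a : Fin d → ℂ) (β : ℂ) {Q : MvPolynomial (Fin d) ℂ} (hQ : Q ≠ 0) :
    wdeg (C β * shiftP a Q - C β * Q) < wdeg Q := by
  have h : C β * shiftP a Q - C β * Q = C β * (shiftP a Q - Q) := by ring
  have h2 : wdeg (C β * (shiftP a Q - Q)) ≤ Q.totalDegree :=
    wdeg_le_of_degLt ((shift_sub_degLt a Q).C_mul β)
  rw [h]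
  have : wdeg Q = Q.totalDegree + 1 := by unfold wdeg; rw [if_neg hQ]
  omega



/-- A complex mv-polynomial vanishing at all real points is zero. -/
lemma eq_zero_of_eval_real_zero : ∀ (n : ℕ) (Q : MvPolynomial (Fin n) ℂ),
    (∀ x : Fin n → ℝ, eval (fun i => (x i : ℂ)) Q = 0) → Q = 0 := by
  intro n
  induction n with
  | zero =>
    intro Q h
    obtain ⟨c, rfl⟩ := (MvPolynomial.C_surjective (Fin 0)) Q
    have := h (fun i => 0)
    simpa using this
  | succ n ih =>
    intro Q h
    have key : ∀ xs : Fin n → ℝ,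
        Polynomial.map (eval (fun i => ((xs i : ℝ) : ℂ))) (finSuccEquiv ℂ n Q) = 0 := by
      intro xs
      apply Polynomial.eq_zero_of_infinite_isRoot
      apply Set.infinite_of_injective_forall_mem
        (f := fun t : ℝ => (t : ℂ)) (hi := Complex.ofReal_injective)
      intro t
      have := h (Fin.cons t xs)
      rw [show (fun i => ((Fin.cons t xs : Fin (n+1) → ℝ) i : ℂ))
          = Fin.cons (t : ℂ) (fun i => ((xs i : ℝ) : ℂ)) from funext fun i => by
        refine Fin.cases ?_ ?_ i <;> simp] at this
      rw [eval_eq_eval_mv_eval'] at this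
      exact this
    have hcoeff : ∀ m : ℕ, (finSuccEquiv ℂ n Q).coeff m = 0 := by
      intro m
      apply ih
      intro xs
      have := key xs
      have := congrArg (fun p => Polynomial.coeff p m) this
      simpa using this
    have : finSuccEquiv ℂ n Q = 0 := Polynomial.ext fun m => hcoeff m
    have := congrArg (finSuccEquiv ℂ n).symm this
    simpa using this



lemma eval_shiftP (y b : Fin d → ℂ) (Q : MvPolynomial (Fin d) ℂ) :
    eval y (shiftP b Q) = eval (fun i => y i + b i) Q := by
  have hhom : (eval y).comp (shiftP b).toRingHom = eval (fun i => y i + b i) := by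
    apply ringHom_ext <;> intro r <;> simp [shiftP]
  calc eval y (shiftP b Q) = ((eval y).comp (shiftP b).toRingHom) Q := rfl
  _ = eval (fun i => y i + b i) Q := by rw [hhom]

lemma continuous_evalR (Q : MvPolynomial (Fin d) ℂ) :
    Continuous (fun x : EuclideanSpace ℝ (Fin d) => eval (fun i => ((x i : ℝ) : ℂ)) Q) := by
  induction Q using MvPolynomial.induction_on with
  | C c => simpa using continuous_const
  | add p q hp hq => simp only [map_add]; exact hp.add hq
  | mul_X p i hp =>
    simp only [map_mul, eval_X]
    exact hp.mul (Complex.continuous_ofReal.comp ((continuous_apply i).comp (PiLp.continuous_ofLp 2 _)))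

/-- existence of a vector with nonzero inner ℝ products against finitely many nonzero vectors -/
lemma exists_inner_ne_zero {k : ℕ} (w : Fin k → EuclideanSpace ℝ (Fin d))
    (T : Finset (Fin k)) (hw : ∀ j ∈ T, w j ≠ 0) :
    ∃ v : EuclideanSpace ℝ (Fin d), ∀ j ∈ T, (inner ℝ v (w j) : ℝ) ≠ 0 := by
  classical
  induction T using Finset.induction with
  | empty => exact ⟨0, by simp⟩
  | insert _ _ hni ih =>
    rename_i j T
    obtain ⟨v, hv⟩ := ih (fun u hu => hw u (Finset.mem_insert_of_mem hu))
    set bad : Set ℝ := ↑((insert j T).image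
      (fun u => -(inner ℝ v (w u) : ℝ) / (inner ℝ (w j) (w u) : ℝ))) with hbad
    have hfin : bad.Finite := (Finset.finite_toSet _)
    obtain ⟨t, ht⟩ := hfin.infinite_compl.nonempty
    refine ⟨v + t • w j, ?_⟩
    intro u hu
    have hiu : (inner ℝ (v + t • w j) (w u) : ℝ)
        = (inner ℝ v (w u) : ℝ) + t * (inner ℝ (w j) (w u) : ℝ) := by
      rw [inner_add_left, real_inner_smul_left]
    intro hzero
    rw [hiu] at hzero
    by_cases hden : (inner ℝ (w j) (w u) : ℝ) = 0
    · rcases Finset.mem_insert.mp hu with rfl | huT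
      · exact hw u (Finset.mem_insert_self _ _) (inner_self_eq_zero.mp hden)
      · rw [hden, mul_zero, add_zero] at hzero
        exact hv u huT hzero
    · have : t = -(inner ℝ v (w u) : ℝ) / (inner ℝ (w j) (w u) : ℝ) := by
        rw [eq_div_iff hden, neg_eq_iff_eq_neg.symm]
        linarith
      apply ht
      rw [hbad]
      simp only [Finset.coe_image, Set.mem_image, Finset.mem_coe]
      exact ⟨u, by simpa using hu, this.symm⟩



/-- choice of a good shift vector -/
lemma exists_good_shift {k : ℕ} (ζ : Fin k → EuclideanSpace ℝ (Fin d))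
    (hζ : Function.Injective ζ) (m l : Fin k) (hlm : l ≠ m) :
    ∃ a : EuclideanSpace ℝ (Fin d), ∀ j, j ≠ m →
      Complex.exp (Complex.I * ((inner ℝ a (ζ j) : ℝ) : ℂ)) ≠
      Complex.exp (Complex.I * ((inner ℝ a (ζ m) : ℝ) : ℂ)) := by
  classical
  set T : Finset (Fin k) := Finset.univ.filter (· ≠ m) with hT
  have hwT : ∀ j ∈ T, ζ j - ζ m ≠ 0 := by
    intro j hj
    rw [hT, Finset.mem_filter] at hj
    exact sub_ne_zero_of_ne (fun h => hj.2 (hζ h))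
  obtain ⟨v, hv⟩ := exists_inner_ne_zero (fun j => ζ j - ζ m) T hwT
  have hlT : l ∈ T := by simp [hT, hlm]
  set M : ℝ := T.sup' ⟨l, hlT⟩ (fun j => |(inner ℝ v (ζ j - ζ m) : ℝ)|) with hM
  have hM0 : 0 ≤ M := le_trans (abs_nonneg (inner ℝ v (ζ l - ζ m) : ℝ)) (Finset.le_sup' (fun j => |(inner ℝ v (ζ j - ζ m) : ℝ)|) hlT)
  set t : ℝ := Real.pi / (1 + M) with ht
  have ht0 : 0 < t := div_pos Real.pi_pos (by linarith)
  refine ⟨t • v, ?_⟩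
  intro j hj
  have hjT : j ∈ T := by simp [hT, hj]
  set θ : ℝ := (inner ℝ (t • v) (ζ j - ζ m) : ℝ) with hθ
  have hθeq : θ = t * (inner ℝ v (ζ j - ζ m) : ℝ) := real_inner_smul_left _ _ _
  have hθne : θ ≠ 0 := by
    rw [hθeq]
    exact mul_ne_zero (ne_of_gt ht0) (hv j hjT)
  have hθlt : |θ| < Real.pi := by
    rw [hθeq, abs_mul, abs_of_pos ht0, ht]
    have hle : |(inner ℝ v (ζ j - ζ m) : ℝ)| ≤ M := Finset.le_sup' (fun j => |(inner ℝ v (ζ j - ζ m) : ℝ)|) hjT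
    calc Real.pi / (1 + M) * |(inner ℝ v (ζ j - ζ m) : ℝ)|
        ≤ Real.pi / (1 + M) * M := by
          exact mul_le_mul_of_nonneg_left hle (le_of_lt (div_pos Real.pi_pos (by linarith)))
      _ < Real.pi := by
          rw [div_mul_eq_mul_div, div_lt_iff₀ (by linarith)]
          nlinarith [Real.pi_pos]
  intro heq
  rw [Complex.exp_eq_exp_iff_exists_int] at heq
  obtain ⟨n, hn⟩ := heq
  have hsub : ((inner ℝ (t • v) (ζ j) : ℝ) : ℂ) - ((inner ℝ (t • v) (ζ m) : ℝ) : ℂ)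
      = (n : ℂ) * (2 * Real.pi) := by
    have : Complex.I * ((inner ℝ (t • v) (ζ j) : ℝ) : ℂ) -
        Complex.I * ((inner ℝ (t • v) (ζ m) : ℝ) : ℂ) = n * (2 * Real.pi * Complex.I) := by
      rw [hn]; ring
    have h2 : Complex.I * (((inner ℝ (t • v) (ζ j) : ℝ) : ℂ) -
        ((inner ℝ (t • v) (ζ m) : ℝ) : ℂ)) = Complex.I * ((n : ℂ) * (2 * Real.pi)) := by
      rw [mul_sub, this]; ring
    exact mul_left_cancel₀ Complex.I_ne_zero h2
  have hθeq2 : (θ : ℂ) = (n : ℂ) * (2 * Real.pi) := by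
    rw [hθ, inner_sub_right, Complex.ofReal_sub, hsub]
  have hθreal : θ = (n : ℝ) * (2 * Real.pi) := by
    exact_mod_cast hθeq2
  rcases eq_or_ne n 0 with rfl | hn0
  · rw [hθreal] at hθne; simp at hθne
  · have h1n : (1 : ℝ) ≤ |(n : ℝ)| := by
      rw [← Int.cast_abs, ← Int.cast_one, Int.cast_le]
      exact Int.one_le_abs hn0
    rw [hθreal, abs_mul] at hθlt
    have habs2 : |2 * Real.pi| = 2 * Real.pi := abs_of_pos (by positivity)
    rw [habs2] at hθlt
    nlinarith [Real.pi_pos]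



lemma diff_step_formula {k : ℕ} (ζ : Fin k → EuclideanSpace ℝ (Fin d))
    (Q : Fin k → MvPolynomial (Fin d) ℂ) (f : EuclideanSpace ℝ (Fin d) → ℂ)
    (hf : ∀ x, f x = ∑ j : Fin k,
      (MvPolynomial.eval (fun i : Fin d => ((x i : ℝ) : ℂ)) (Q j)) *
        Complex.exp (Complex.I * ((inner ℝ x (ζ j) : ℝ) : ℂ)))
    (a : EuclideanSpace ℝ (Fin d)) (m : Fin k) (x : EuclideanSpace ℝ (Fin d)) :
    f (x + a) - Complex.exp (Complex.I * ((inner ℝ a (ζ m) : ℝ) : ℂ)) * f x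
    = ∑ j : Fin k,
      (MvPolynomial.eval (fun i : Fin d => ((x i : ℝ) : ℂ))
        (C (Complex.exp (Complex.I * ((inner ℝ a (ζ j) : ℝ) : ℂ))) *
            shiftP (fun i => ((a i : ℝ) : ℂ)) (Q j)
          - C (Complex.exp (Complex.I * ((inner ℝ a (ζ m) : ℝ) : ℂ))) * Q j)) *
        Complex.exp (Complex.I * ((inner ℝ x (ζ j) : ℝ) : ℂ)) := by
  rw [hf (x + a), hf x, Finset.mul_sum, ← Finset.sum_sub_distrib]
  apply Finset.sum_congr rfl
  intro j _
  have hinner : (inner ℝ (x + a) (ζ j) : ℝ) = (inner ℝ x (ζ j) : ℝ) + (inner ℝ a (ζ j) : ℝ) :=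
    inner_add_left _ _ _
  have hexp : Complex.exp (Complex.I * ((inner ℝ (x + a) (ζ j) : ℝ) : ℂ))
      = Complex.exp (Complex.I * ((inner ℝ x (ζ j) : ℝ) : ℂ)) *
        Complex.exp (Complex.I * ((inner ℝ a (ζ j) : ℝ) : ℂ)) := by
    rw [hinner, ← Complex.exp_add]
    push_cast
    ring_nf
  have heval : MvPolynomial.eval (fun i : Fin d => (((x + a) i : ℝ) : ℂ)) (Q j)
      = MvPolynomial.eval (fun i : Fin d => ((x i : ℝ) : ℂ))
        (shiftP (fun i => ((a i : ℝ) : ℂ)) (Q j)) := by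
    rw [eval_shiftP]
    have harg : (fun i : Fin d => (((x + a) i : ℝ) : ℂ))
        = fun i => ((x i : ℝ) : ℂ) + ((a i : ℝ) : ℂ) := by
      funext i
      push_cast [PiLp.add_apply]
      ring
    rw [harg]
  rw [hexp, heval, map_sub, map_mul, map_mul, eval_C, eval_C]
  ring

lemma diff_step_memLp {p : ℝ≥0∞} (f : EuclideanSpace ℝ (Fin d) → ℂ)
    (hmem : MemLp f p volume) (a : EuclideanSpace ℝ (Fin d)) (c : ℂ) :
    MemLp (fun x => f (x + a) - c * f x) p volume := by
  have h1 : MemLp (fun x => f (x + a)) p volume :=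
    hmem.comp_measurePreserving (measurePreserving_add_right volume a)
  exact h1.sub (hmem.const_mul c)



lemma keyLp (d : ℕ) (hd : 1 ≤ d) :
    ∀ (N k : ℕ) (ζ : Fin k → EuclideanSpace ℝ (Fin d)), Function.Injective ζ →
    ∀ (Q : Fin k → MvPolynomial (Fin d) ℂ), (∑ j, wdeg (Q j)) ≤ N →
    ∀ (f : EuclideanSpace ℝ (Fin d) → ℂ),
      (∀ x, f x = ∑ j : Fin k,
        (MvPolynomial.eval (fun i : Fin d => ((x i : ℝ) : ℂ)) (Q j)) *
          Complex.exp (Complex.I * ((inner ℝ x (ζ j) : ℝ) : ℂ))) →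
    ∀ (p : ℝ≥0∞), 1 ≤ p → p ≠ ⊤ → MemLp f p volume → ∀ l, Q l = 0 := by
  intro N
  induction N with
  | zero =>
    intro k ζ hζ Q hN f hf p hp1 hp2 hmem l
    have : wdeg (Q l) = 0 := by
      have := Finset.sum_eq_zero_iff.mp (Nat.le_zero.mp hN) l (Finset.mem_univ l)
      exact this
    exact wdeg_eq_zero_iff.mp this
  | succ N IH =>
    intro k ζ hζ Q hN f hf p hp1 hp2 hmem l
    by_cases hQl : Q l = 0
    · exact hQl
    -- pivot choice
    by_cases hex : ∃ m, m ≠ l ∧ Q m ≠ 0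
    · obtain ⟨m, hml, hQm⟩ := hex
      obtain ⟨a, ha⟩ := exists_good_shift ζ hζ m l (Ne.symm hml)
      set a' : Fin d → ℂ := fun i => ((a i : ℝ) : ℂ) with ha'
      set β : Fin k → ℂ := fun j =>
        Complex.exp (Complex.I * ((inner ℝ a (ζ j) : ℝ) : ℂ)) with hβ
      set R : Fin k → MvPolynomial (Fin d) ℂ :=
        fun j => C (β j) * shiftP a' (Q j) - C (β m) * Q j with hR
      set g : EuclideanSpace ℝ (Fin d) → ℂ := fun x => f (x + a) - β m * f x with hgdef
      have hg : ∀ x, g x = ∑ j : Fin k,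
          (MvPolynomial.eval (fun i : Fin d => ((x i : ℝ) : ℂ)) (R j)) *
            Complex.exp (Complex.I * ((inner ℝ x (ζ j) : ℝ) : ℂ)) :=
        fun x => diff_step_formula ζ Q f hf a m x
      have hgm : MemLp g p volume := diff_step_memLp f hmem a (β m)
      have hsum : ∑ j, wdeg (R j) ≤ N := by
        have hlt : ∑ j, wdeg (R j) < ∑ j, wdeg (Q j) :=
          Finset.sum_lt_sum (fun j _ => wdeg_R_le a' (β j) (β m) (Q j))
            ⟨m, Finset.mem_univ m, wdeg_R_lt a' (β m) hQm⟩
        omega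
      have hRl : R l = 0 := IH k ζ hζ R hsum g hg p hp1 hp2 hgm l
      exact eq_zero_of_shift_rel (ha l (Ne.symm hml)) hRl
    · push_neg at hex
      have hQother : ∀ m, m ≠ l → Q m = 0 := fun m hm => by
        by_contra h; exact h (hex m hm)
      have hf' : ∀ x, f x =
          (MvPolynomial.eval (fun i : Fin d => ((x i : ℝ) : ℂ)) (Q l)) *
            Complex.exp (Complex.I * ((inner ℝ x (ζ l) : ℝ) : ℂ)) := by
        intro x
        rw [hf x]
        refine Finset.sum_eq_single l (fun j _ hj => ?_) (by simp)
        rw [hQother j hj]; simp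
      -- all shifts fix Q l
      have hshift : ∀ aa : EuclideanSpace ℝ (Fin d),
          shiftP (fun i => ((aa i : ℝ) : ℂ)) (Q l) = Q l := by
        intro aa
        set a' : Fin d → ℂ := fun i => ((aa i : ℝ) : ℂ) with ha'
        set β : Fin k → ℂ := fun j =>
          Complex.exp (Complex.I * ((inner ℝ aa (ζ j) : ℝ) : ℂ)) with hβ
        set R : Fin k → MvPolynomial (Fin d) ℂ :=
          fun j => C (β j) * shiftP a' (Q j) - C (β l) * Q j with hR
        set g : EuclideanSpace ℝ (Fin d) → ℂ := fun x => f (x + aa) - β l * f x with hgdef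
        have hg : ∀ x, g x = ∑ j : Fin k,
            (MvPolynomial.eval (fun i : Fin d => ((x i : ℝ) : ℂ)) (R j)) *
              Complex.exp (Complex.I * ((inner ℝ x (ζ j) : ℝ) : ℂ)) :=
          fun x => diff_step_formula ζ Q f hf aa l x
        have hgm : MemLp g p volume := diff_step_memLp f hmem aa (β l)
        have hsum : ∑ j, wdeg (R j) ≤ N := by
          have hlt : ∑ j, wdeg (R j) < ∑ j, wdeg (Q j) :=
            Finset.sum_lt_sum (fun j _ => wdeg_R_le a' (β j) (β l) (Q j))
              ⟨l, Finset.mem_univ l, wdeg_R_lt a' (β l) hQl⟩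
          omega
        have hRl : R l = 0 := IH k ζ hζ R hsum g hg p hp1 hp2 hgm l
        have hfactor : C (β l) * (shiftP a' (Q l) - Q l) = 0 := by
          rw [mul_sub]; exact hRl
        rcases mul_eq_zero.mp hfactor with hC | hsub
        · exfalso
          have : β l ≠ 0 := Complex.exp_ne_zero _
          exact this (by
            have := congrArg (constantCoeff) hC
            simpa using this)
        · exact sub_eq_zero.mp hsub
      -- Q l is constant
      set c : ℂ := eval (fun _ : Fin d => (0 : ℂ)) (Q l) with hc
      have heval_const : ∀ z : Fin d → ℝ, eval (fun i => (z i : ℂ)) (Q l) = c := by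
        intro z
        set aa : EuclideanSpace ℝ (Fin d) := (WithLp.equiv 2 (Fin d → ℝ)).symm z with haa
        have h := hshift aa
        have h2 := congrArg (eval (fun _ : Fin d => (0 : ℂ))) h
        rw [eval_shiftP] at h2
        have haai : ∀ i, (aa i : ℝ) = z i := fun i => rfl
        have harg : (fun i : Fin d => (0 : ℂ) + ((aa i : ℝ) : ℂ)) = fun i => (z i : ℂ) := by
          funext i; rw [haai]; ring
        rw [harg] at h2
        exact h2
      have hQC : Q l = C c := by
        have hvanish : ∀ z : Fin d → ℝ, eval (fun i => (z i : ℂ)) (Q l - C c) = 0 := by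
          intro z
          rw [map_sub, heval_const z, eval_C, sub_self]
        have := eq_zero_of_eval_real_zero d (Q l - C c) hvanish
        exact sub_eq_zero.mp this
      -- constants in L^p on ℝ^d (d ≥ 1) must vanish
      have hnorm : ∀ x : EuclideanSpace ℝ (Fin d), ‖f x‖ = ‖c‖ := by
        intro x
        rw [hf' x, hQC, eval_C, norm_mul]
        have : ‖Complex.exp (Complex.I * ((inner ℝ x (ζ l) : ℝ) : ℂ))‖ = 1 := by
          rw [Complex.norm_exp]
          simp
        rw [this, mul_one]
      have hconst : MemLp (fun _ : EuclideanSpace ℝ (Fin d) => c) p volume := by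
        refine MemLp.of_le hmem aestronglyMeasurable_const ?_
        filter_upwards with x
        rw [hnorm x]
      have hp0 : p ≠ 0 := by
        intro h; rw [h] at hp1; exact absurd hp1 (by simp)
      rcases (memLp_const_iff hp0 hp2).mp hconst with hc0 | hfin
      · rw [hQC, hc0, map_zero]
      · exfalso
        haveI : Nonempty (Fin d) := ⟨⟨0, hd⟩⟩
        have huniv : (volume : Measure (EuclideanSpace ℝ (Fin d))) Set.univ = ⊤ :=
          MeasureTheory.measure_univ_of_isAddLeftInvariant volume
        rw [huniv] at hfin
        exact absurd hfin (by simp)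


lemma keyLinf (d : ℕ) :
    ∀ (N k : ℕ) (ζ : Fin k → EuclideanSpace ℝ (Fin d)), Function.Injective ζ →
    ∀ (Q : Fin k → MvPolynomial (Fin d) ℂ), (∑ j, wdeg (Q j)) ≤ N →
    ∀ (f : EuclideanSpace ℝ (Fin d) → ℂ),
      (∀ x, f x = ∑ j : Fin k,
        (MvPolynomial.eval (fun i : Fin d => ((x i : ℝ) : ℂ)) (Q j)) *
          Complex.exp (Complex.I * ((inner ℝ x (ζ j) : ℝ) : ℂ))) →
    MemLp f ⊤ volume → ∀ l, ∃ c : ℂ, Q l = C c := by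
  intro N
  induction N with
  | zero =>
    intro k ζ hζ Q hN f hf hmem l
    have h0 : wdeg (Q l) = 0 :=
      Finset.sum_eq_zero_iff.mp (Nat.le_zero.mp hN) l (Finset.mem_univ l)
    exact ⟨0, by rw [wdeg_eq_zero_iff.mp h0, map_zero]⟩
  | succ N IH =>
    intro k ζ hζ Q hN f hf hmem l
    by_cases h0 : (Q l).totalDegree = 0
    · exact ⟨_, eq_C_of_totalDegree_eq_zero h0⟩
    have hQl : Q l ≠ 0 := fun h => h0 (by rw [h]; simp)
    by_cases hex : ∃ m, m ≠ l ∧ Q m ≠ 0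
    · obtain ⟨m, hml, hQm⟩ := hex
      obtain ⟨a, ha⟩ := exists_good_shift ζ hζ m l (Ne.symm hml)
      set a' : Fin d → ℂ := fun i => ((a i : ℝ) : ℂ) with ha'
      set β : Fin k → ℂ := fun j =>
        Complex.exp (Complex.I * ((inner ℝ a (ζ j) : ℝ) : ℂ)) with hβ
      set R : Fin k → MvPolynomial (Fin d) ℂ :=
        fun j => C (β j) * shiftP a' (Q j) - C (β m) * Q j with hR
      set g : EuclideanSpace ℝ (Fin d) → ℂ := fun x => f (x + a) - β m * f x with hgdef
      have hg : ∀ x, g x = ∑ j : Fin k,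
          (MvPolynomial.eval (fun i : Fin d => ((x i : ℝ) : ℂ)) (R j)) *
            Complex.exp (Complex.I * ((inner ℝ x (ζ j) : ℝ) : ℂ)) :=
        fun x => diff_step_formula ζ Q f hf a m x
      have hgm : MemLp g ⊤ volume := diff_step_memLp f hmem a (β m)
      have hsum : ∑ j, wdeg (R j) ≤ N := by
        have hlt : ∑ j, wdeg (R j) < ∑ j, wdeg (Q j) :=
          Finset.sum_lt_sum (fun j _ => wdeg_R_le a' (β j) (β m) (Q j))
            ⟨m, Finset.mem_univ m, wdeg_R_lt a' (β m) hQm⟩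
        omega
      obtain ⟨cR, hcR⟩ := IH k ζ hζ R hsum g hg hgm l
      exact eq_C_of_shift_rel (ha l (Ne.symm hml)) hcR
    · push_neg at hex
      have hQother : ∀ m, m ≠ l → Q m = 0 := fun m hm => by
        by_contra h; exact h (hex m hm)
      have hf' : ∀ x, f x =
          (MvPolynomial.eval (fun i : Fin d => ((x i : ℝ) : ℂ)) (Q l)) *
            Complex.exp (Complex.I * ((inner ℝ x (ζ l) : ℝ) : ℂ)) := by
        intro x
        rw [hf x]
        refine Finset.sum_eq_single l (fun j _ hj => ?_) (by simp)
        rw [hQother j hj]; simp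
      set E : EuclideanSpace ℝ (Fin d) → ℂ :=
        fun x => eval (fun i => ((x i : ℝ) : ℂ)) (Q l) with hE
      -- pointwise bound on E
      have hnormfE : ∀ x, ‖f x‖ = ‖E x‖ := by
        intro x
        rw [hf' x, norm_mul]
        have : ‖Complex.exp (Complex.I * ((inner ℝ x (ζ l) : ℝ) : ℂ))‖ = 1 := by
          rw [Complex.norm_exp]; simp
        rw [this, mul_one]
      set M : ℝ := (eLpNormEssSup f volume).toReal with hM
      have hMfin : eLpNormEssSup f volume ≠ ⊤ := by
        have := hmem.2
        rw [eLpNorm_exponent_top] at this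
        exact this.ne
      have haeM : ∀ᵐ x ∂(volume : Measure (EuclideanSpace ℝ (Fin d))), ‖E x‖ ≤ M := by
        filter_upwards [enorm_ae_le_eLpNormEssSup f volume] with x hx
        rw [← hnormfE x]
        calc ‖f x‖ = ((‖f x‖₊ : ℝ≥0∞)).toReal := by simp
        _ ≤ M := ENNReal.toReal_mono hMfin hx
      have hEbound : ∀ x, ‖E x‖ ≤ M := by
        by_contra hcon
        push_neg at hcon
        obtain ⟨x₀, hx₀⟩ := hcon
        set U : Set (EuclideanSpace ℝ (Fin d)) := {x | M < ‖E x‖} with hU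
        have hUopen : IsOpen U := isOpen_lt continuous_const ((continuous_evalR (Q l)).norm)
        have hUnull : (volume : Measure (EuclideanSpace ℝ (Fin d))) U = 0 := by
          refine measure_mono_null (fun x hx => ?_) (ae_iff.mp haeM)
          exact not_le.mpr hx
        have := hUopen.eq_empty_of_measure_zero hUnull
        rw [Set.eq_empty_iff_forall_notMem] at this
        exact this x₀ hx₀
      -- shift cocycle
      have hcocycle : ∀ aa : EuclideanSpace ℝ (Fin d), ∃ κ : ℂ,
          ∀ x, E (x + aa) = E x + κ := by
        intro aa
        set a' : Fin d → ℂ := fun i => ((aa i : ℝ) : ℂ) with ha'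
        set β : Fin k → ℂ := fun j =>
          Complex.exp (Complex.I * ((inner ℝ aa (ζ j) : ℝ) : ℂ)) with hβ
        set R : Fin k → MvPolynomial (Fin d) ℂ :=
          fun j => C (β j) * shiftP a' (Q j) - C (β l) * Q j with hR
        set g : EuclideanSpace ℝ (Fin d) → ℂ := fun x => f (x + aa) - β l * f x with hgdef
        have hg : ∀ x, g x = ∑ j : Fin k,
            (MvPolynomial.eval (fun i : Fin d => ((x i : ℝ) : ℂ)) (R j)) *
              Complex.exp (Complex.I * ((inner ℝ x (ζ j) : ℝ) : ℂ)) :=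
          fun x => diff_step_formula ζ Q f hf aa l x
        have hgm : MemLp g ⊤ volume := diff_step_memLp f hmem aa (β l)
        have hsum : ∑ j, wdeg (R j) ≤ N := by
          have hlt : ∑ j, wdeg (R j) < ∑ j, wdeg (Q j) :=
            Finset.sum_lt_sum (fun j _ => wdeg_R_le a' (β j) (β l) (Q j))
              ⟨l, Finset.mem_univ l, wdeg_R_lt a' (β l) hQl⟩
          omega
        obtain ⟨cR, hcR⟩ := IH k ζ hζ R hsum g hg hgm l
        have hβne : β l ≠ 0 := Complex.exp_ne_zero _
        have hfactor : C (β l) * (shiftP a' (Q l) - Q l) = C cR := by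
          rw [mul_sub]; exact hcR
        have hdiff : shiftP a' (Q l) - Q l = C ((β l)⁻¹ * cR) := by
          have := congrArg (fun P => C ((β l)⁻¹) * P) hfactor
          rw [← mul_assoc, ← C_mul, inv_mul_cancel₀ hβne, C_1, one_mul] at this
          rw [this, C_mul]
        refine ⟨(β l)⁻¹ * cR, fun x => ?_⟩
        have hev := congrArg (eval (fun i => ((x i : ℝ) : ℂ))) hdiff
        rw [map_sub, eval_C, eval_shiftP] at hev
        have harg : (fun i : Fin d => ((x i : ℝ) : ℂ) + a' i)
            = fun i : Fin d => (((x + aa) i : ℝ) : ℂ) := by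
          funext i
          rw [ha']
          push_cast [PiLp.add_apply]
          ring
        rw [harg] at hev
        have : E (x + aa) - E x = (β l)⁻¹ * cR := hev
        linear_combination this
      -- iterate the cocycle: κ must vanish
      have hkappa0 : ∀ aa : EuclideanSpace ℝ (Fin d), E aa = E 0 := by
        intro aa
        obtain ⟨κ, hκ⟩ := hcocycle aa
        have hiter : ∀ n : ℕ, E (n • aa) = E 0 + n * κ := by
          intro n
          induction n with
          | zero => simp
          | succ n ihn =>
            rw [succ_nsmul, hκ (n • aa), ihn]
            push_cast
            ring
        have hκ0 : κ = 0 := by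
          by_contra hκne
          have hκpos : 0 < ‖κ‖ := norm_pos_iff.mpr hκne
          obtain ⟨n, hn⟩ := exists_nat_gt ((M + ‖E 0‖) / ‖κ‖)
          have h1 : ‖(n : ℂ) * κ‖ ≤ ‖E 0 + (n : ℂ) * κ‖ + ‖E 0‖ := by
            simpa using norm_sub_le (E 0 + (n : ℂ) * κ) (E 0)
          have h2 : ‖E 0 + (n:ℂ) * κ‖ ≤ M := by
            rw [← hiter n]; exact hEbound _
          have h3 : ‖(n : ℂ) * κ‖ = n * ‖κ‖ := by
            rw [norm_mul]
            simp
          have h4 : (M + ‖E 0‖) < n * ‖κ‖ := by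
            rw [div_lt_iff₀ hκpos] at hn
            linarith
          linarith
        have := hκ 0
        rw [zero_add, hκ0, add_zero] at this
        exact this
      -- conclude Q l is constant
      set c : ℂ := E 0 with hc
      refine ⟨c, ?_⟩
      have hvanish : ∀ z : Fin d → ℝ, eval (fun i => (z i : ℂ)) (Q l - C c) = 0 := by
        intro z
        set aa : EuclideanSpace ℝ (Fin d) := (WithLp.equiv 2 (Fin d → ℝ)).symm z with haa
        have h := hkappa0 aa
        rw [map_sub, eval_C]
        have haai : (fun i : Fin d => ((z i : ℝ) : ℂ)) = fun i : Fin d => ((aa i : ℝ) : ℂ) := rfl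
        rw [haai]
        have : E aa = eval (fun i : Fin d => ((aa i : ℝ) : ℂ)) (Q l) := rfl
        rw [← this, h]
        ring
      have := eq_zero_of_eval_real_zero d (Q l - C c) hvanish
      exact sub_eq_zero.mp this


end

open MeasureTheory Complex
open scoped ENNReal

/-- If `f(x) = Σ_j Q_j(x) e^{i x·ζ⁽ʲ⁾}` with distinct frequencies `ζ⁽ʲ⁾` and polynomial
coefficients `Q_j`, then `f ∈ L^p` for some `1 ≤ p < ∞` forces all `Q_j = 0`, while
`f ∈ L^∞` forces all `Q_j` to be constant. -/
theorem statement18 (d k : ℕ) (hd : 1 ≤ d)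
    (ζ : Fin k → EuclideanSpace ℝ (Fin d)) (hζ : Function.Injective ζ)
    (Q : Fin k → MvPolynomial (Fin d) ℂ)
    (f : EuclideanSpace ℝ (Fin d) → ℂ)
    (hf : ∀ x, f x = ∑ j : Fin k,
      (MvPolynomial.eval (fun i : Fin d => ((x i : ℝ) : ℂ)) (Q j)) *
        Complex.exp (Complex.I * ((inner ℝ x (ζ j) : ℝ) : ℂ))) :
    (∀ p : ℝ≥0∞, 1 ≤ p → p < ⊤ → MemLp f p volume → ∀ j, Q j = 0) ∧
    (MemLp f ⊤ volume → ∀ j, ∃ c : ℂ, Q j = MvPolynomial.C c) := by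
  constructor
  · intro p hp1 hp2 hmem j
    exact keyLp d hd (∑ j, wdeg (Q j)) k ζ hζ Q le_rfl f hf p hp1 hp2.ne hmem j
  · intro hmem j
    exact keyLinf d (∑ j, wdeg (Q j)) k ζ hζ Q le_rfl f hf hmem j
end
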